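/- Let σ be a permutation of {1,…,n}. If T(σ) contains an occurrence of the pattern 132, then either σ contains an occurrence of the pattern 2431, or σ contains an occurrence of the barred pattern 241-5̄-3, i.e. there exist values a < b < c < d occurring in σ in the order b, d, a, c such that no value e > d occurs in σ between a and c. -/

import Mathlib

private theorem length_takeWhile_ne_lt {w : List ℕ} {m : ℕ} (hm : m ∈ w) :
    (w.takeWhile (· ≠ m)).length < w.length := by
  induction w with
  | nil => cases hm
  | cons a as ih =>
    by_cases ha : a = m
    · subst ha
      simp [List.takeWhile_cons]
    · rw [List.takeWhile_cons_of_pos (by simpa using ha)]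
      have hm' : m ∈ as := by
        rcases List.mem_cons.mp hm with h | h
        · exact absurd h.symm ha
        · exact h
      simpa using Nat.succ_lt_succ (ih hm')

private theorem length_tail_dropWhile_lt {w : List ℕ} (hw : w ≠ []) (p : ℕ → Bool) :
    ((w.dropWhile p).tail).length < w.length := by
  cases hd : w.dropWhile p with
  | nil => simpa using List.length_pos_iff.mpr hw
  | cons x xs =>
    have h1 : (x :: xs).length ≤ w.length := by
      rw [← hd]; exact (List.dropWhile_sublist p).length_le
    simp only [List.tail_cons]
    exact lt_of_lt_of_le (by simp) h1

/-- The classical stack sort operator on words: `S(ε) = ε` and `S(L m R) = S(L) S(R) m`,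
where `m` is the largest entry of the word `L m R`. -/
def stackSort : List ℕ → List ℕ
  | [] => []
  | a :: as =>
    let m := ((a :: as).max?).getD 0
    stackSort ((a :: as).takeWhile (· ≠ m)) ++
      stackSort (((a :: as).dropWhile (· ≠ m)).tail) ++ [m]
termination_by w => w.length
decreasing_by
  · refine length_takeWhile_ne_lt ?_
    have : (a :: as).max? = some (((a :: as).max?).getD 0) := by
      cases h : (a :: as).max? with
      | none => simp [List.max?_eq_none_iff] at h
      | some b => simp
    exact List.max?_mem this
  · exact length_tail_dropWhile_lt (by simp) _

/-- The revstack sort operator `T = S ∘ rev`. -/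
def revstackSort (w : List ℕ) : List ℕ := stackSort w.reverse

/-- The word of the identity permutation of `{1,…,n}`, namely `1 2 ⋯ n`. -/
def idPerm (n : ℕ) : List ℕ := List.range' 1 n

/-- `w` is (the word of) a permutation of `{1,…,n}`. -/
def IsPermWord (n : ℕ) (w : List ℕ) : Prop := w.Perm (idPerm n)

/-- `x` precedes `y` in the word `w`, i.e. the position of `x` is smaller than that of `y`. -/
def Precedes (w : List ℕ) (x y : ℕ) : Prop := w.idxOf x < w.idxOf y

/-- `w` contains an occurrence of the pattern `132`: values `a < b < c` occurring in
the order `a, c, b`. -/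
def Contains132 (w : List ℕ) : Prop :=
  ∃ a b c, a ∈ w ∧ b ∈ w ∧ c ∈ w ∧ a < b ∧ b < c ∧ Precedes w a c ∧ Precedes w c b

/-- `w` contains an occurrence of the pattern `2431`: values `a < b < c < d` occurring in
the order `b, d, c, a`. -/
def Contains2431 (w : List ℕ) : Prop :=
  ∃ a b c d, a ∈ w ∧ b ∈ w ∧ c ∈ w ∧ d ∈ w ∧ a < b ∧ b < c ∧ c < d ∧
    Precedes w b d ∧ Precedes w d c ∧ Precedes w c a

/-- `w` contains an occurrence of the barred pattern `241 5̄ 3`: values `a < b < c < d`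
occurring in the order `b, d, a, c` with no value `e > d` lying between `a` and `c` in `w`. -/
def ContainsBarred24153 (w : List ℕ) : Prop :=
  ∃ a b c d, a ∈ w ∧ b ∈ w ∧ c ∈ w ∧ d ∈ w ∧ a < b ∧ b < c ∧ c < d ∧
    Precedes w b d ∧ Precedes w d a ∧ Precedes w a c ∧
    ¬ ∃ e, e ∈ w ∧ d < e ∧ Precedes w a e ∧ Precedes w e c

/-- The number of descents of a word. -/
def des (w : List ℕ) : ℕ := ((w.zip w.tail).filter (fun p => p.2 < p.1)).length

/-- The finset of all words of permutations of `{1,…,n}`. -/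
def permsOf (n : ℕ) : Finset (List ℕ) := (idPerm n).permutations.toFinset

/-- The finset of `t`-revstack sortable permutations of `{1,…,n}`. -/
def revstackSortable (n t : ℕ) : Finset (List ℕ) :=
  (permsOf n).filter (fun w => revstackSort^[t] w = idPerm n)

/-- The finset of `t`-stack sortable permutations of `{1,…,n}`. -/
def stackSortable (n t : ℕ) : Finset (List ℕ) :=
  (permsOf n).filter (fun w => stackSort^[t] w = idPerm n)

/-- The descent polynomial `W(A;x) = ∑_{π ∈ A} x^{1+des(π)}` of a set of permutations. -/
noncomputable def descPoly (A : Finset (List ℕ)) : Polynomial ℚ :=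
  ∑ w ∈ A, Polynomial.X ^ (1 + des w)

/-- The `m`-th Eulerian polynomial `A_m(x) = ∑_{π ∈ S_m} x^{1+des(π)}`, with `A_0(x) = 1`. -/
noncomputable def eulerianPoly (m : ℕ) : Polynomial ℚ :=
  if m = 0 then 1 else descPoly (permsOf m)

/-- `v_t(n,i)`: the number of `t`-revstack sortable permutations of `{1,…,n}`
with exactly `i` descents. -/
def vNum (t n i : ℕ) : ℕ := ((revstackSortable n t).filter (fun w => des w = i)).card

/-- `w_t(n,i)`: the number of `t`-stack sortable permutations of `{1,…,n}`
with exactly `i` descents. -/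
def wNum (t n i : ℕ) : ℕ := ((stackSortable n t).filter (fun w => des w = i)).card

/-! ### Auxiliary lemmas for the main theorem -/

private theorem prec_append_left' {u v : List ℕ} {x y : ℕ} (hx : x ∈ u) (hy : y ∈ u) :
    Precedes (u ++ v) x y ↔ Precedes u x y := by
  unfold Precedes
  rw [List.idxOf_append_of_mem hx, List.idxOf_append_of_mem hy]

private theorem prec_append_right' {u v : List ℕ} {x y : ℕ} (hx : x ∉ u) (hy : y ∉ u) :
    Precedes (u ++ v) x y ↔ Precedes v x y := by
  unfold Precedes
  rw [List.idxOf_append_of_notMem hx, List.idxOf_append_of_notMem hy]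
  omega

private theorem prec_append_cross' {u v : List ℕ} {x y : ℕ} (hx : x ∈ u) (hy : y ∉ u) :
    Precedes (u ++ v) x y := by
  unfold Precedes
  rw [List.idxOf_append_of_mem hx, List.idxOf_append_of_notMem hy]
  have := List.idxOf_lt_length_iff.mpr hx
  omega

private theorem not_prec_append_cross' {u v : List ℕ} {x y : ℕ} (hx : x ∉ u) (hy : y ∈ u) :
    ¬ Precedes (u ++ v) x y := by
  unfold Precedes
  rw [List.idxOf_append_of_mem hy, List.idxOf_append_of_notMem hx]
  have := List.idxOf_lt_length_iff.mpr hy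
  omega

private theorem precedes_total' {l : List ℕ} {x y : ℕ} (hx : x ∈ l) (hy : y ∈ l)
    (hxy : x ≠ y) : Precedes l x y ∨ Precedes l y x := by
  have h := (List.idxOf_inj hx).not.mpr hxy
  unfold Precedes
  omega

private theorem precedes_asymm' {l : List ℕ} {x y : ℕ} (h : Precedes l x y) :
    ¬ Precedes l y x := by
  unfold Precedes at *; omega

private theorem split_of_precedes {l : List ℕ} {x y : ℕ} (hx : x ∈ l) (hy : y ∈ l)
    (h : Precedes l x y) : ∃ l1 l2, l = l1 ++ l2 ∧ x ∈ l1 ∧ y ∈ l2 := by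
  set i := l.idxOf x with hi
  refine ⟨l.take (i + 1), l.drop (i + 1), (List.take_append_drop _ _).symm, ?_, ?_⟩
  · by_contra hxn
    have hx2 : x ∈ l.drop (i + 1) := by
      have := (List.take_append_drop (i + 1) l) ▸ hx
      rcases List.mem_append.mp this with h' | h'
      · exact absurd h' hxn
      · exact h'
    have h1 : l.idxOf x = (l.take (i+1)).length + (l.drop (i+1)).idxOf x := by
      conv_lhs => rw [← List.take_append_drop (i + 1) l]
      exact List.idxOf_append_of_notMem hxn
    have h2 : (l.take (i+1)).length = min (i+1) l.length := List.length_take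
    have h3 : i < l.length := List.idxOf_lt_length_iff.mpr hx
    omega
  · by_contra hyn
    have hy1 : y ∈ l.take (i + 1) := by
      have := (List.take_append_drop (i + 1) l) ▸ hy
      rcases List.mem_append.mp this with h' | h'
      · exact h'
      · exact absurd h' hyn
    have h1 : l.idxOf y = (l.take (i+1)).idxOf y := by
      conv_lhs => rw [← List.take_append_drop (i + 1) l]
      exact List.idxOf_append_of_mem hy1
    have h2 : (l.take (i+1)).idxOf y < (l.take (i+1)).length :=
      List.idxOf_lt_length_iff.mpr hy1
    have h3 : (l.take (i+1)).length = min (i+1) l.length := List.length_take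
    unfold Precedes at h
    omega

private theorem precedes_reverse_of {l : List ℕ} (hl : l.Nodup) {x y : ℕ} (hx : x ∈ l)
    (hy : y ∈ l) (h : Precedes l x y) : Precedes l.reverse y x := by
  obtain ⟨l1, l2, rfl, h1, h2⟩ := split_of_precedes hx hy h
  rw [List.reverse_append]
  have hd := List.disjoint_of_nodup_append hl
  exact prec_append_cross' (List.mem_reverse.mpr h2)
    (fun hc => hd h1 (List.mem_reverse.mp hc))

private theorem precedes_reverse_iff {l : List ℕ} (hl : l.Nodup) {x y : ℕ} (hx : x ∈ l)
    (hy : y ∈ l) (hxy : x ≠ y) : Precedes l.reverse x y ↔ Precedes l y x := by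
  constructor
  · intro h
    rcases precedes_total' hy hx hxy.symm with h' | h'
    · exact h'
    · exact absurd (precedes_reverse_of hl hx hy h') (precedes_asymm' h)
  · exact precedes_reverse_of hl hy hx

/-- The fundamental decomposition of `stackSort` on a nonempty word. -/
private theorem stackSort_decomp (w : List ℕ) (hw : w ≠ []) :
    ∃ L R m, w = L ++ m :: R ∧
      stackSort w = stackSort L ++ stackSort R ++ [m] ∧ (∀ x ∈ w, x ≤ m) := by
  obtain ⟨a, as, rfl⟩ := List.exists_cons_of_ne_nil hw
  set m := ((a :: as).max?).getD 0 with hm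
  have hmax : (a :: as).max? = some m := by
    cases h : (a :: as).max? with
    | none => simp [List.max?_eq_none_iff] at h
    | some b => simp [hm, h]
  have hle : ∀ x ∈ (a :: as), x ≤ m := by
    rw [List.max?_eq_some_iff] at hmax
    exact hmax.2
  have hmem : m ∈ (a :: as) := List.max?_mem hmax
  have hdw : (a :: as).dropWhile (· ≠ m) ≠ [] := by
    intro hc
    rw [List.dropWhile_eq_nil_iff] at hc
    have := hc m hmem
    simp at this
  have hhead : ((a :: as).dropWhile (· ≠ m)).head hdw = m := by
    have := List.head_dropWhile_not (fun x => decide (x ≠ m)) hdw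
    simpa using this
  have hsplit : (a :: as) = (a :: as).takeWhile (· ≠ m) ++
      m :: ((a :: as).dropWhile (· ≠ m)).tail := by
    conv_lhs => rw [← (List.takeWhile_append_dropWhile (p := fun x => decide (x ≠ m)) : _ = (a :: as))]
    congr 1
    have h2 := (List.cons_head_tail hdw).symm
    rw [hhead] at h2
    exact h2
  exact ⟨(a :: as).takeWhile (· ≠ m), ((a :: as).dropWhile (· ≠ m)).tail, m, hsplit,
    by rw [stackSort], hle⟩

private theorem stackSort_perm (w : List ℕ) : (stackSort w).Perm w := by
  match w with
  | [] => rw [stackSort]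
  | a :: as =>
    obtain ⟨L, R, m, hsplit, heq, -⟩ := stackSort_decomp (a :: as) (by simp)
    have hlen : (a :: as).length = L.length + 1 + R.length := by
      rw [hsplit]; simp; omega
    have hL : L.length < (a :: as).length := by omega
    have hR : R.length < (a :: as).length := by omega
    have ihL := stackSort_perm L
    have ihR := stackSort_perm R
    rw [heq, hsplit]
    have h1 : (stackSort L ++ stackSort R ++ [m]).Perm (L ++ R ++ [m]) :=
      (ihL.append ihR).append (List.Perm.refl [m])
    have h2 : (L ++ R ++ [m]).Perm (L ++ m :: R) := by
      rw [List.append_assoc]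
      refine (List.Perm.refl L).append ?_
      simp [List.perm_append_comm (l₁ := R) (l₂ := [m])]
    exact h1.trans h2
termination_by w.length
decreasing_by
  · exact hL
  · exact hR

private theorem mem_stackSort_iff {w : List ℕ} {x : ℕ} : x ∈ stackSort w ↔ x ∈ w :=
  (stackSort_perm w).mem_iff
private theorem prec_mid_iff {L R : List ℕ} {m x y : ℕ} (hx : x ∉ L) (hx2 : x ≠ m)
    (hy : y ∉ L) (hy2 : y ≠ m) : Precedes (L ++ m :: R) x y ↔ Precedes R x y := by
  rw [show L ++ m :: R = (L ++ [m]) ++ R by simp]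
  exact prec_append_right' (by simp [hx, hx2]) (by simp [hy, hy2])

private theorem prec_m_right {L R : List ℕ} {m y : ℕ} (hy : y ∉ L) (hy2 : y ≠ m) :
    Precedes (L ++ m :: R) m y := by
  rw [show L ++ m :: R = (L ++ [m]) ++ R by simp]
  exact prec_append_cross' (by simp) (by simp [hy, hy2])

/-- Lemma A: a descent in `stackSort w` forces a larger intermediate element in `w`. -/
private theorem lemA (w : List ℕ) (hnd : w.Nodup) :
    ∀ x z, x ∈ w → z ∈ w → z < x → Precedes (stackSort w) x z →
    ∃ e, e ∈ w ∧ x < e ∧ Precedes w x e ∧ Precedes w e z := by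
  match w with
  | [] => intro x z hx; simp at hx
  | a :: as =>
    obtain ⟨L, R, m, hsplit, heq, hle⟩ := stackSort_decomp (a :: as) (by simp)
    have hlen : (a :: as).length = L.length + 1 + R.length := by rw [hsplit]; simp; omega
    have hLlen : L.length < (a :: as).length := by omega
    have hRlen : R.length < (a :: as).length := by omega
    intro x z hx hz hzx hP
    rw [heq] at hP
    rw [hsplit] at hnd hx hz ⊢
    have hndL : L.Nodup := (List.nodup_append.mp hnd).1
    have hndmR := (List.nodup_append.mp hnd).2.1
    have hdisj := (List.nodup_append.mp hnd).2.2
    have hndR : R.Nodup := (List.nodup_cons.mp hndmR).2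
    have hmR : m ∉ R := (List.nodup_cons.mp hndmR).1
    have hmL : m ∉ L := fun h => hdisj _ h _ List.mem_cons_self rfl
    have hLR : ∀ {x}, x ∈ L → x ∉ R := fun h hr => hdisj _ h _ (List.mem_cons_of_mem _ hr) rfl
    have hLm : ∀ {x}, x ∈ L → x ≠ m := fun h he => hdisj _ h _ List.mem_cons_self he
    have hle' : ∀ x ∈ L ++ m :: R, x ≤ m := fun x hx => hle x (hsplit ▸ hx)
    have hSapp : stackSort L ++ stackSort R ++ [m] = stackSort L ++ (stackSort R ++ [m]) := by
      rw [List.append_assoc]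
    rw [hSapp] at hP
    simp only [List.mem_append, List.mem_cons] at hx hz
    have hzm : z ≠ m := by
      intro hzm'; subst hzm'
      exact absurd (hle' x (by simpa using hx)) (by omega)
    have hxm : x ≠ m := by
      intro hxm'; subst hxm'
      rcases hz with hz | hz | hz
      · exact not_prec_append_cross' (fun hc => hmL (mem_stackSort_iff.mp hc))
          (mem_stackSort_iff.mpr hz) hP
      · exact hzm hz
      · have hP' : Precedes (stackSort R ++ [x]) x z :=
          (prec_append_right' (fun hc => hmL (mem_stackSort_iff.mp hc))
            (fun hc => hLR (mem_stackSort_iff.mp hc) hz)).mp hP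
        exact not_prec_append_cross' (fun hc => hmR (mem_stackSort_iff.mp hc))
          (mem_stackSort_iff.mpr hz) hP'
    rcases hx with hx | hx | hx
    · rcases hz with hz | hz | hz
      · -- both in L
        have hP' : Precedes (stackSort L) x z :=
          (prec_append_left' (mem_stackSort_iff.mpr hx) (mem_stackSort_iff.mpr hz)).mp hP
        obtain ⟨e, heL, hxe, h1, h2⟩ := lemA L hndL x z hx hz hzx hP'
        refine ⟨e, by simp [heL], hxe, ?_, ?_⟩
        · exact (prec_append_left' hx heL).mpr h1
        · exact (prec_append_left' heL hz).mpr h2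
      · exact absurd hz hzm
      · -- x ∈ L, z ∈ R : take e = m
        refine ⟨m, by simp, lt_of_le_of_ne (hle' x (by simp [hx])) (hLm hx), ?_, ?_⟩
        · exact prec_append_cross' hx hmL
        · exact prec_m_right (fun hc => hLR hc hz) (fun hc : z = m => hmR (hc ▸ hz))
    · exact absurd hx hxm
    · rcases hz with hz | hz | hz
      · -- x ∈ R, z ∈ L : impossible
        exact absurd hP (not_prec_append_cross'
          (fun hc => hLR (mem_stackSort_iff.mp hc) hx) (mem_stackSort_iff.mpr hz))
      · exact absurd hz hzm
      · -- both in R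
        have hxnL : x ∉ stackSort L := fun hc => hLR (mem_stackSort_iff.mp hc) hx
        have hznL : z ∉ stackSort L := fun hc => hLR (mem_stackSort_iff.mp hc) hz
        have hP' : Precedes (stackSort R) x z :=
          (prec_append_left' (mem_stackSort_iff.mpr hx) (mem_stackSort_iff.mpr hz)).mp
            ((prec_append_right' hxnL hznL).mp hP)
        obtain ⟨e, heR, hxe, h1, h2⟩ := lemA R hndR x z hx hz hzx hP'
        have heL : e ∉ L := fun hc => hLR hc heR
        have hem : e ≠ m := fun hc => hmR (hc ▸ heR)
        refine ⟨e, by simp [heR], hxe, ?_, ?_⟩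
        · exact (prec_mid_iff (fun hc => hLR hc hx) (fun hc : x = m => hmR (hc ▸ hx)) heL
            hem).mpr h1
        · exact (prec_mid_iff heL hem (fun hc => hLR hc hz)
            (fun hc : z = m => hmR (hc ▸ hz))).mpr h2
termination_by w.length
decreasing_by
  · exact hLlen
  · exact hRlen
/-- Lemma B: an ascent in `stackSort w` means the same order in `w`, or reversed order
with nothing larger than `z` in between. -/
private theorem lemB (w : List ℕ) (hnd : w.Nodup) :
    ∀ x z, x ∈ w → z ∈ w → x < z → Precedes (stackSort w) x z →
    Precedes w x z ∨ (Precedes w z x ∧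
      ∀ f, f ∈ w → Precedes w z f → Precedes w f x → f < z) := by
  match w with
  | [] => intro x z hx; simp at hx
  | a :: as =>
    obtain ⟨L, R, m, hsplit, heq, hle⟩ := stackSort_decomp (a :: as) (by simp)
    have hlen : (a :: as).length = L.length + 1 + R.length := by rw [hsplit]; simp; omega
    have hLlen : L.length < (a :: as).length := by omega
    have hRlen : R.length < (a :: as).length := by omega
    intro x z hx hz hxz hP
    rw [heq] at hP
    rw [hsplit] at hnd hx hz ⊢
    have hndL : L.Nodup := (List.nodup_append.mp hnd).1
    have hndmR := (List.nodup_append.mp hnd).2.1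
    have hdisj := (List.nodup_append.mp hnd).2.2
    have hndR : R.Nodup := (List.nodup_cons.mp hndmR).2
    have hmR : m ∉ R := (List.nodup_cons.mp hndmR).1
    have hmL : m ∉ L := fun h => hdisj _ h _ List.mem_cons_self rfl
    have hLR : ∀ {x}, x ∈ L → x ∉ R := fun h hr => hdisj _ h _ (List.mem_cons_of_mem _ hr) rfl
    have hle' : ∀ x ∈ L ++ m :: R, x ≤ m := fun x hx => hle x (hsplit ▸ hx)
    have hSapp : stackSort L ++ stackSort R ++ [m] = stackSort L ++ (stackSort R ++ [m]) := by
      rw [List.append_assoc]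
    rw [hSapp] at hP
    simp only [List.mem_append, List.mem_cons] at hx hz
    have hxm : x ≠ m := by
      intro hxm'; subst hxm'
      exact absurd (hle' z (by simpa using hz)) (by omega)
    rcases hz with hz | hz | hz
    · -- z ∈ L; then x ∈ L is forced
      rcases hx with hx | hx | hx
      · -- both in L : use IH
        have hP' : Precedes (stackSort L) x z :=
          (prec_append_left' (mem_stackSort_iff.mpr hx) (mem_stackSort_iff.mpr hz)).mp hP
        rcases lemB L hndL x z hx hz hxz hP' with h | ⟨h1, h2⟩
        · exact Or.inl ((prec_append_left' hx hz).mpr h)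
        · refine Or.inr ⟨(prec_append_left' hz hx).mpr h1, ?_⟩
          intro f hf hzf hfx
          have hfL : f ∈ L := by
            simp only [List.mem_append, List.mem_cons] at hf
            rcases hf with hf | hf | hf
            · exact hf
            · subst hf
              exact absurd hfx (precedes_asymm' (prec_append_cross' hx hmL))
            · exact absurd hfx (precedes_asymm' (prec_append_cross' hx (fun hc => hLR hc hf)))
          exact h2 f hfL ((prec_append_left' hz hfL).mp hzf) ((prec_append_left' hfL hx).mp hfx)
      · exact absurd hx hxm
      · -- x ∈ R, z ∈ L : Precedes in stackSort impossible
        exact absurd hP (not_prec_append_cross'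
          (fun hc => hLR (mem_stackSort_iff.mp hc) hx) (mem_stackSort_iff.mpr hz))
    · -- z = m
      subst hz
      rcases hx with hx | hx | hx
      · exact Or.inl (prec_append_cross' hx hmL)
      · exact absurd hx hxm
      · -- x ∈ R : reversed order, and everything after z is < z
        refine Or.inr ⟨prec_m_right (fun hc => hLR hc hx) (fun hc : x = z => hmR (hc ▸ hx)), ?_⟩
        intro f hf hzf hfx
        simp only [List.mem_append, List.mem_cons] at hf
        rcases hf with hf | hf | hf
        · exact absurd hzf (precedes_asymm' (prec_append_cross' hf hmL))
        · subst hf; unfold Precedes at hzf; omega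
        · exact lt_of_le_of_ne (hle' f (by simp [hf])) (fun hc : f = z => hmR (hc ▸ hf))
    · -- z ∈ R
      rcases hx with hx | hx | hx
      · -- x ∈ L, z ∈ R : same order in w
        exact Or.inl (prec_append_cross' hx (fun hc => hLR hc hz))
      · exact absurd hx hxm
      · -- both in R : use IH
        have hxnL : x ∉ stackSort L := fun hc => hLR (mem_stackSort_iff.mp hc) hx
        have hznL : z ∉ stackSort L := fun hc => hLR (mem_stackSort_iff.mp hc) hz
        have hP' : Precedes (stackSort R) x z :=
          (prec_append_left' (mem_stackSort_iff.mpr hx) (mem_stackSort_iff.mpr hz)).mp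
            ((prec_append_right' hxnL hznL).mp hP)
        have hxL : x ∉ L := fun hc => hLR hc hx
        have hzL : z ∉ L := fun hc => hLR hc hz
        have hzm : z ≠ m := fun hc : z = m => hmR (hc ▸ hz)
        rcases lemB R hndR x z hx hz hxz hP' with h | ⟨h1, h2⟩
        · exact Or.inl ((prec_mid_iff hxL hxm hzL hzm).mpr h)
        · refine Or.inr ⟨(prec_mid_iff hzL hzm hxL hxm).mpr h1, ?_⟩
          intro f hf hzf hfx
          have hfR : f ∈ R := by
            simp only [List.mem_append, List.mem_cons] at hf
            rcases hf with hf | hf | hf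
            · exact absurd hzf (precedes_asymm' (prec_append_cross' hf (fun hc => hLR hc hz)))
            · exfalso
              have hmz : Precedes (L ++ m :: R) m z := prec_m_right hzL hzm
              rw [hf] at hzf
              exact precedes_asymm' hmz hzf
            · exact hf
          have hfL : f ∉ L := fun hc => hLR hc hfR
          have hfm : f ≠ m := fun hc : f = m => hmR (hc ▸ hfR)
          exact h2 f hfR ((prec_mid_iff hzL hzm hfL hfm).mp hzf)
            ((prec_mid_iff hfL hfm hxL hxm).mp hfx)
termination_by w.length
decreasing_by
  · exact hLlen
  · exact hRlen
theorem revstack_132_implies_2431_or_24153bar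
    (n : ℕ) (σ : List ℕ) (hσ : IsPermWord n σ)
    (h : Contains132 (revstackSort σ)) :
    Contains2431 σ ∨ ContainsBarred24153 σ := by
  have hndσ : σ.Nodup := by
    refine hσ.nodup_iff.mpr ?_
    simp [idPerm, List.nodup_range']
  have hndw : σ.reverse.Nodup := List.nodup_reverse.mpr hndσ
  simp only [Contains132, revstackSort] at h
  obtain ⟨a, b, c, haT, hbT, hcT, hab, hbc, hPac, hPcb⟩ := h
  have haw : a ∈ σ.reverse := mem_stackSort_iff.mp haT
  have hbw : b ∈ σ.reverse := mem_stackSort_iff.mp hbT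
  have hcw : c ∈ σ.reverse := mem_stackSort_iff.mp hcT
  have haσ : a ∈ σ := List.mem_reverse.mp haw
  have hbσ : b ∈ σ := List.mem_reverse.mp hbw
  have hcσ : c ∈ σ := List.mem_reverse.mp hcw
  obtain ⟨e, hew, hce, hPce, hPeb⟩ := lemA σ.reverse hndw c b hcw hbw hbc hPcb
  have heσ : e ∈ σ := List.mem_reverse.mp hew
  have hσec : Precedes σ e c :=
    (precedes_reverse_iff hndσ hcσ heσ (by omega)).mp hPce
  have hσbe : Precedes σ b e :=
    (precedes_reverse_iff hndσ heσ hbσ (by omega)).mp hPeb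
  rcases lemB σ.reverse hndw a c haw hcw (by omega) hPac with h1 | ⟨h1, h2⟩
  · -- c precedes a in σ : the 2431 pattern (a, b, c, e)
    have hσca : Precedes σ c a :=
      (precedes_reverse_iff hndσ haσ hcσ (by omega)).mp h1
    exact Or.inl ⟨a, b, c, e, haσ, hbσ, hcσ, heσ, hab, hbc, hce, hσbe, hσec, hσca⟩
  · -- a precedes c in σ, nothing > c between : barred pattern (a, b, c, e)
    have hσac : Precedes σ a c :=
      (precedes_reverse_iff hndσ hcσ haσ (by omega)).mp h1
    have h2' : ∀ f, f ∈ σ → Precedes σ a f → Precedes σ f c → f < c := by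
      intro f hfσ haf hfc
      have hfc' : f ≠ c := by
        intro hcc; subst hcc; unfold Precedes at hfc; omega
      have hfa : f ≠ a := by
        intro hcc; subst hcc; unfold Precedes at haf; omega
      exact h2 f (List.mem_reverse.mpr hfσ)
        ((precedes_reverse_iff hndσ hcσ hfσ (Ne.symm hfc')).mpr hfc)
        ((precedes_reverse_iff hndσ hfσ haσ hfa).mpr haf)
    have hσea : Precedes σ e a := by
      rcases precedes_total' haσ heσ (by omega) with h' | h'
      · exact absurd (h2' e heσ h' hσec) (by omega)
      · exact h'
    refine Or.inr ⟨a, b, c, e, haσ, hbσ, hcσ, heσ, hab, hbc, hce, hσbe, hσea, hσac, ?_⟩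
    rintro ⟨f, hfσ, hef, hPaf, hPfc⟩
    have := h2' f hfσ hPaf hPfc
    omega
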